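/- Let H be a connected hypergraph with rank k and a positive eigenvector x for ρ = ρ(A_H). Then ρ(A_H) ≤ max over edges {i1,…,is} ∈ E(H) with degrees d_{i1} ≥ ⋯ ≥ d_{is} of the quantity (d_{i1}^{k-s+1} d_{i2} ⋯ d_{is})^{1/k}. -/

import Mathlib

open Finset

/-- The multiset of entries of an index tuple. -/
def idxMultiset {n k : ℕ} (idx : Fin k → Fin n) : Multiset (Fin n) := ↑(List.ofFn idx)

/-- Entries of the adjacency tensor of a general hypergraph with edge set `E` and rank `k`:
`1/(k-1)!` on tuples that are permutations of an edge of size `k`;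
`(k-s+1)!/k!` on tuples whose multiset is an edge of size `s < k` with one of its
vertices repeated `k-s+1` times; `0` otherwise. -/
noncomputable def adjEntry {R : Type*} [Field R] {n : ℕ} (k : ℕ)
    (E : Finset (Finset (Fin n))) (idx : Fin k → Fin n) : R :=
  ∑ e ∈ E,
    if e.card = k ∧ idxMultiset idx = e.val then 1 / (Nat.factorial (k - 1) : R)
    else if e.card < k ∧ ∃ j ∈ e, idxMultiset idx = e.val + Multiset.replicate (k - e.card) j then
      (Nat.factorial (k - e.card + 1) : R) / (Nat.factorial k : R)
    else 0

/-- Full contraction `A x^k = ∑ a_{i₁…i_k} x_{i₁} ⋯ x_{i_k}`. -/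
noncomputable def tFull {R : Type*} [CommRing R] {n : ℕ} (k : ℕ)
    (A : (Fin k → Fin n) → R) (x : Fin n → R) : R :=
  ∑ idx : Fin k → Fin n, A idx * ∏ j, x (idx j)

/-- `(A x^{k-1})_i = ∑_{i₂,…,i_k} a_{i i₂ … i_k} x_{i₂} ⋯ x_{i_k}`. -/
noncomputable def tApply {R : Type*} [CommRing R] {n : ℕ} (k : ℕ) [NeZero k]
    (A : (Fin k → Fin n) → R) (x : Fin n → R) (i : Fin n) : R :=
  ∑ idx : Fin k → Fin n,
    if idx 0 = i then A idx * ∏ j ∈ Finset.univ.erase 0, x (idx j) else 0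

/-- Degree of a vertex: the number of edges containing it. -/
def deg {n : ℕ} (E : Finset (Finset (Fin n))) (i : Fin n) : ℕ :=
  (E.filter (fun e => i ∈ e)).card

/-- `E` has rank `k`: all edges have size at most `k` and some edge has size `k`. -/
def HasRank {n : ℕ} (E : Finset (Finset (Fin n))) (k : ℕ) : Prop :=
  (∀ e ∈ E, e.card ≤ k) ∧ ∃ e ∈ E, e.card = k

/-- Connectedness of a hypergraph: any two vertices are joined by a sequence of
vertices consecutively sharing an edge. -/
def Conn {n : ℕ} (E : Finset (Finset (Fin n))) : Prop :=
  ∀ u v : Fin n, Relation.ReflTransGen (fun a b => ∃ e ∈ E, a ∈ e ∧ b ∈ e) u v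

/-- The spectral radius of a symmetric nonnegative tensor, via the variational
characterization `ρ(A) = max { x^T (A x^{k-1}) : x ≥ 0, ∑ xᵢ^k = 1 }`. -/
noncomputable def specRad {n : ℕ} (k : ℕ) (A : (Fin k → Fin n) → ℝ) : ℝ :=
  sSup {r : ℝ | ∃ x : Fin n → ℝ, (∀ i, 0 ≤ x i) ∧ ∑ i, x i ^ k = 1 ∧ r = tFull k A x}

namespace Stmt6Aux

variable {n : ℕ}

def cnt (k : ℕ) (M : Multiset (Fin n)) : ℕ :=
  (Finset.univ.filter fun idx : Fin k → Fin n => idxMultiset idx = M).card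

lemma idxMultiset_succ {m : ℕ} (idx : Fin (m+1) → Fin n) :
    idxMultiset idx = idx 0 ::ₘ idxMultiset (Fin.tail idx) := by
  unfold idxMultiset
  rw [List.ofFn_succ]
  rfl

lemma card_fst (m : ℕ) (i : Fin n) (M : Multiset (Fin n)) :
    (Finset.univ.filter fun idx : Fin (m+1) → Fin n =>
        idx 0 = i ∧ idxMultiset idx = M).card
      = if i ∈ M then cnt m (M.erase i) else 0 := by
  split_ifs with hi
  · refine Finset.card_bij' (fun idx _ => Fin.tail idx) (fun g _ => Fin.cons i g)
      ?_ ?_ ?_ ?_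
    · intro idx ha
      simp only [Finset.mem_filter, Finset.mem_univ, true_and] at ha ⊢
      obtain ⟨h0, hM⟩ := ha
      rw [idxMultiset_succ, h0] at hM
      rw [← hM, Multiset.erase_cons_head]
    · intro g hg
      simp only [Finset.mem_filter, Finset.mem_univ, true_and] at hg ⊢
      refine ⟨Fin.cons_zero _ _, ?_⟩
      rw [idxMultiset_succ, Fin.cons_zero, Fin.tail_cons, hg, Multiset.cons_erase hi]
    · intro a ha
      have h0 : a 0 = i := (Finset.mem_filter.mp ha).2.1
      rw [← h0]
      exact Fin.cons_self_tail a
    · intro g _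
      exact Fin.tail_cons (α := fun _ => Fin n) i g
  · rw [Finset.card_eq_zero, Finset.filter_eq_empty_iff]
    rintro idx - ⟨h0, hM⟩
    apply hi
    rw [← hM, ← h0, idxMultiset_succ]
    exact Multiset.mem_cons_self _ _

lemma cnt_succ (m : ℕ) (M : Multiset (Fin n)) :
    cnt (m+1) M = ∑ a ∈ M.toFinset, cnt m (M.erase a) := by
  rw [cnt, Finset.card_eq_sum_card_fiberwise
    (f := fun idx : Fin (m+1) → Fin n => idx 0) (t := Finset.univ) (fun _ _ => mem_univ _)]
  have h1 : ∀ a : Fin n,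
      (Finset.filter (fun idx : Fin (m+1) → Fin n => idx 0 = a)
        (Finset.filter (fun idx => idxMultiset idx = M) Finset.univ)).card
      = if a ∈ M then cnt m (M.erase a) else 0 := by
    intro a
    rw [Finset.filter_filter, ← card_fst m a M]
    congr 1
    apply Finset.filter_congr
    intro idx _
    tauto
  simp_rw [h1]
  rw [← Finset.sum_filter]
  apply Finset.sum_congr _ (fun _ _ => rfl)
  ext a
  simp

lemma cnt_mul_prod (M : Multiset (Fin n)) :
    cnt (Multiset.card M) M * ∏ a ∈ M.toFinset, (M.count a).factorial
      = (Multiset.card M).factorial := by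
  induction M using Multiset.strongInductionOn with
  | _ M IH =>
    rcases eq_or_ne M 0 with rfl | hM0
    · simp [cnt, idxMultiset]
      rw [Finset.card_eq_one]
      exact ⟨fun i => absurd i.2 (by simp), by
        ext f; rw [Finset.mem_singleton]
        exact iff_of_true (Finset.mem_univ _) (funext fun i => i.elim0)⟩
    · obtain ⟨m, hm⟩ : ∃ m, Multiset.card M = m + 1 := by
        refine ⟨Multiset.card M - 1, ?_⟩
        have : Multiset.card M ≠ 0 := by simpa using hM0
        omega
      rw [hm, cnt_succ, Finset.sum_mul]
      have key : ∀ a ∈ M.toFinset,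
          cnt m (M.erase a) * ∏ b ∈ M.toFinset, (M.count b).factorial
            = Nat.factorial m * M.count a := by
        intro a ha
        have haM : a ∈ M := Multiset.mem_toFinset.mp ha
        have hcard : Multiset.card (M.erase a) = m := by
          rw [Multiset.card_erase_of_mem haM, hm]; rfl
        have hIH := IH (M.erase a) (Multiset.erase_lt.mpr haM)
        rw [hcard] at hIH
        have hsub : (M.erase a).toFinset ⊆ M.toFinset := by
          intro b hb
          rw [Multiset.mem_toFinset] at hb ⊢
          exact Multiset.mem_of_mem_erase hb
        have h1 : ∏ b ∈ M.toFinset, ((M.erase a).count b).factorial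
            = ∏ b ∈ (M.erase a).toFinset, ((M.erase a).count b).factorial := by
          refine (Finset.prod_subset hsub ?_).symm
          intro b _ hnb
          have : (M.erase a).count b = 0 := by
            rwa [Multiset.count_eq_zero, ← Multiset.mem_toFinset]
          simp [this]
        have hca : M.count a = (M.count a - 1) + 1 :=
          (Nat.succ_pred_eq_of_pos (Multiset.count_pos.mpr haM)).symm
        have hfac : (M.count a).factorial = M.count a * (M.count a - 1).factorial := by
          conv_lhs => rw [hca]
          rw [Nat.factorial_succ, ← hca]
        have h2 : ∏ b ∈ M.toFinset, (M.count b).factorial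
            = M.count a * ∏ b ∈ M.toFinset, ((M.erase a).count b).factorial := by
          rw [← Finset.mul_prod_erase M.toFinset _ ha,
              ← Finset.mul_prod_erase M.toFinset (fun b => ((M.erase a).count b).factorial) ha]
          have h3 : ∏ b ∈ M.toFinset.erase a, ((M.erase a).count b).factorial
               = ∏ b ∈ M.toFinset.erase a, (M.count b).factorial := by
            refine Finset.prod_congr rfl fun b hb => ?_
            rw [Multiset.count_erase_of_ne (Finset.ne_of_mem_erase hb)]
          rw [h3, Multiset.count_erase_self, hfac, mul_assoc]
        rw [h2, h1, ← mul_assoc, mul_comm (cnt m (M.erase a)) (M.count a), mul_assoc, hIH,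
          mul_comm]
      rw [Finset.sum_congr rfl key, ← Finset.mul_sum, Multiset.toFinset_sum_count_eq, hm,
        Nat.factorial_succ, mul_comm]

lemma cnt_nodup (M : Multiset (Fin n)) (h : M.Nodup) :
    cnt (Multiset.card M) M = (Multiset.card M).factorial := by
  have h0 := cnt_mul_prod M
  have h1 : ∏ a ∈ M.toFinset, (M.count a).factorial = 1 :=
    Finset.prod_eq_one fun a ha => by
      rw [Multiset.count_eq_one_of_mem h (Multiset.mem_toFinset.mp ha), Nat.factorial_one]
  rwa [h1, mul_one] at h0

lemma cnt_rep (t : Multiset (Fin n)) (ht : t.Nodup) (j : Fin n) (hj : j ∉ t)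
    (r : ℕ) (hr : 0 < r) :
    cnt (Multiset.card t + r) (t + Multiset.replicate r j) * r.factorial
      = (Multiset.card t + r).factorial := by
  have hM := cnt_mul_prod (t + Multiset.replicate r j)
  have hcard : Multiset.card (t + Multiset.replicate r j) = Multiset.card t + r := by simp
  have htf : (t + Multiset.replicate r j).toFinset = insert j t.toFinset := by
    ext a
    simp only [Multiset.toFinset_add, Multiset.mem_union, Multiset.mem_toFinset,
      Finset.mem_insert, Multiset.toFinset_replicate, Finset.mem_union]
    rw [if_neg hr.ne']
    simp [or_comm]
  have hprod : ∏ a ∈ (t + Multiset.replicate r j).toFinset,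
      ((t + Multiset.replicate r j).count a).factorial = r.factorial := by
    rw [htf, Finset.prod_insert (by simp [hj])]
    have hcj : (t + Multiset.replicate r j).count j = r := by
      rw [Multiset.count_add, Multiset.count_replicate, if_pos rfl,
        Multiset.count_eq_zero.mpr hj, zero_add]
    rw [hcj]
    have h1 : ∀ a ∈ t.toFinset, ((t + Multiset.replicate r j).count a).factorial = 1 := by
      intro a ha
      have haj : j ≠ a := by rintro rfl; exact hj (Multiset.mem_toFinset.mp ha)
      rw [Multiset.count_add, Multiset.count_replicate, if_neg haj, add_zero,
        Multiset.count_eq_one_of_mem ht (Multiset.mem_toFinset.mp ha), Nat.factorial_one]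
    rw [Finset.prod_eq_one h1, mul_one]
  rwa [hcard, hprod] at hM



lemma adjEntry_nonneg (k : ℕ) (E : Finset (Finset (Fin n))) (idx : Fin k → Fin n) :
    (0:ℝ) ≤ adjEntry k E idx := by
  refine Finset.sum_nonneg fun e _ => ?_
  split_ifs <;> positivity

lemma rowsum_le (m : ℕ) (E : Finset (Finset (Fin n)))
    (hrk : ∀ e ∈ E, e.card ≤ m + 1) (hE : ∀ e ∈ E, e.Nonempty) (i : Fin n) :
    ∑ idx ∈ Finset.univ.filter (fun idx : Fin (m+1) → Fin n => idx 0 = i),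
        (adjEntry (m+1) E idx : ℝ) ≤ (deg E i : ℝ) := by
  unfold adjEntry
  rw [Finset.sum_comm]
  have hdeg : (deg E i : ℝ) = ∑ e ∈ E, if i ∈ e then (1:ℝ) else 0 := by
    rw [deg, Finset.sum_boole]
  rw [hdeg]
  apply Finset.sum_le_sum
  intro e he
  clear hdeg
  have hs1 : 1 ≤ e.card := Finset.card_pos.mpr (hE e he)
  rcases eq_or_lt_of_le (hrk e he) with hsk | hlt
  · -- full-size edge
    have hterm : ∀ idx : Fin (m+1) → Fin n,
        (if e.card = m+1 ∧ idxMultiset idx = e.val then 1 / (Nat.factorial (m+1-1) : ℝ)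
         else if e.card < m+1 ∧ ∃ j ∈ e, idxMultiset idx = e.val + Multiset.replicate (m+1 - e.card) j then
           (Nat.factorial (m+1 - e.card + 1) : ℝ) / (Nat.factorial (m+1) : ℝ)
         else 0)
        = if idxMultiset idx = e.val then 1 / (Nat.factorial m : ℝ) else 0 := by
      intro idx
      have : ¬ e.card < m + 1 := by omega
      simp [hsk, this]
    simp_rw [hterm]
    rw [← Finset.sum_filter, Finset.sum_const, Finset.filter_filter, card_fst]
    by_cases hie : i ∈ e
    · rw [if_pos hie, if_pos (Finset.mem_val.mpr hie)]
      have hnd : (e.val.erase i).Nodup := e.nodup.erase i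
      have hcard : Multiset.card (e.val.erase i) = m := by
        rw [Multiset.card_erase_of_mem (Finset.mem_val.mpr hie)]
        simp [hsk]
      have := cnt_nodup (e.val.erase i) hnd
      rw [hcard] at this
      rw [this, nsmul_eq_mul, mul_one_div, div_self]
      exact_mod_cast (Nat.factorial_pos m).ne'
    · rw [if_neg hie, if_neg (fun h => hie (Finset.mem_val.mp h))]
      simp
  · -- small edge
    obtain ⟨r, hrdef⟩ : ∃ r, r = m + 1 - e.card := ⟨_, rfl⟩
    have hr : 0 < r := by omega
    have hterm : ∀ idx : Fin (m+1) → Fin n,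
        (if e.card = m+1 ∧ idxMultiset idx = e.val then 1 / (Nat.factorial (m+1-1) : ℝ)
         else if e.card < m+1 ∧ ∃ j ∈ e, idxMultiset idx = e.val + Multiset.replicate (m+1 - e.card) j then
           (Nat.factorial (m+1 - e.card + 1) : ℝ) / (Nat.factorial (m+1) : ℝ)
         else 0)
        = if (∃ j ∈ e, idxMultiset idx = e.val + Multiset.replicate r j) then
            (Nat.factorial (r + 1) : ℝ) / (Nat.factorial (m+1) : ℝ) else 0 := by
      intro idx
      have h1 : e.card ≠ m + 1 := by omega
      simp [h1, hlt, ← hrdef]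
    simp_rw [hterm]
    rw [← Finset.sum_filter, Finset.sum_const, Finset.filter_filter]
    by_cases hie : i ∈ e
    · rw [if_pos hie]
      -- count bound
      set F := Finset.univ.filter (fun idx : Fin (m+1) → Fin n =>
        idx 0 = i ∧ ∃ j ∈ e, idxMultiset idx = e.val + Multiset.replicate r j) with hF
      have hsub : F ⊆ e.biUnion (fun j => Finset.univ.filter
          (fun idx : Fin (m+1) → Fin n =>
            idx 0 = i ∧ idxMultiset idx = e.val + Multiset.replicate r j)) := by
        intro idx h
        simp only [hF, Finset.mem_filter, Finset.mem_univ, true_and, Finset.mem_biUnion] at h ⊢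
        obtain ⟨h0, j, hj, hms⟩ := h
        exact ⟨j, hj, h0, hms⟩
      have hcardle : F.card ≤ ∑ j ∈ e, (Finset.univ.filter
          (fun idx : Fin (m+1) → Fin n =>
            idx 0 = i ∧ idxMultiset idx = e.val + Multiset.replicate r j)).card :=
        le_trans (Finset.card_le_card hsub) (Finset.card_biUnion_le)
      -- value of each term
      have hiv : i ∈ e.val := Finset.mem_val.mpr hie
      have hNi : (Finset.univ.filter (fun idx : Fin (m+1) → Fin n =>
            idx 0 = i ∧ idxMultiset idx = e.val + Multiset.replicate r i)).card
            * Nat.factorial r = Nat.factorial m := by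
        rw [card_fst]
        have hmem : i ∈ e.val + Multiset.replicate r i := Multiset.mem_add.mpr (Or.inl hiv)
        rw [if_pos hmem]
        have h1 : e.val + Multiset.replicate r i
            = i ::ₘ (e.val.erase i + Multiset.replicate r i) := by
          rw [← Multiset.cons_add, Multiset.cons_erase hiv]
        rw [h1, Multiset.erase_cons_head]
        have hcc : Multiset.card (e.val.erase i) + r = m := by
          rw [Multiset.card_erase_of_mem hiv]
          simp only [Finset.card_val, Nat.pred_eq_sub_one]
          clear hcardle hsub hF F
          omega
        have := cnt_rep (e.val.erase i) (e.nodup.erase i) i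
          ((e.nodup).notMem_erase) r hr
        rwa [hcc] at this
      have hNj : ∀ j ∈ e.erase i, (Finset.univ.filter (fun idx : Fin (m+1) → Fin n =>
            idx 0 = i ∧ idxMultiset idx = e.val + Multiset.replicate r j)).card
            * Nat.factorial (r+1) = Nat.factorial m := by
        intro j hj
        have hji : j ≠ i := Finset.ne_of_mem_erase hj
        have hje : j ∈ e := Finset.mem_of_mem_erase hj
        have hjv : j ∈ e.val := Finset.mem_val.mpr hje
        rw [card_fst]
        have hmem : i ∈ e.val + Multiset.replicate r j := Multiset.mem_add.mpr (Or.inl hiv)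
        rw [if_pos hmem]
        have hjei : j ∈ e.val.erase i := (Multiset.mem_erase_of_ne hji).mpr hjv
        have h1 : e.val + Multiset.replicate r j
            = i ::ₘ (e.val.erase i + Multiset.replicate r j) := by
          rw [← Multiset.cons_add, Multiset.cons_erase hiv]
        have h2 : e.val.erase i + Multiset.replicate r j
            = (e.val.erase i).erase j + Multiset.replicate (r+1) j := by
          rw [Multiset.replicate_succ, Multiset.add_cons, ← Multiset.cons_add,
            Multiset.cons_erase hjei]
        rw [h1, Multiset.erase_cons_head, h2]
        have hndj : ((e.val.erase i).erase j).Nodup := (e.nodup.erase i).erase j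
        have hnmj : j ∉ (e.val.erase i).erase j := (e.nodup.erase i).notMem_erase
        have hcc : Multiset.card ((e.val.erase i).erase j) + (r+1) = m := by
          rw [Multiset.card_erase_of_mem hjei, Multiset.card_erase_of_mem hiv]
          have h3 : 2 ≤ Multiset.card e.val := by
            rw [Finset.card_val] at *
            exact Finset.one_lt_card.mpr ⟨i, hie, j, hje, hji.symm⟩
          simp only [Finset.card_val, Nat.pred_eq_sub_one] at h3 ⊢
          clear hcardle hsub hF F hNi
          omega
        have := cnt_rep ((e.val.erase i).erase j) hndj j hnmj (r+1) (Nat.succ_pos r)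
        rwa [hcc] at this
      -- now combine
      have hsum : (∑ j ∈ e, (Finset.univ.filter
          (fun idx : Fin (m+1) → Fin n =>
            idx 0 = i ∧ idxMultiset idx = e.val + Multiset.replicate r j)).card)
            * Nat.factorial (r+1) ≤ Nat.factorial (m+1) := by
        rw [← Finset.add_sum_erase e _ hie, add_mul, Finset.sum_mul]
        have hA : (Finset.univ.filter (fun idx : Fin (m+1) → Fin n =>
            idx 0 = i ∧ idxMultiset idx = e.val + Multiset.replicate r i)).card
            * Nat.factorial (r+1) = Nat.factorial m * (r+1) := by
          have : Nat.factorial (r+1) = (r+1) * Nat.factorial r := Nat.factorial_succ r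
          rw [this, ← mul_assoc, mul_comm _ (r+1), mul_assoc, hNi, mul_comm]
        have hB : ∑ j ∈ e.erase i, (Finset.univ.filter (fun idx : Fin (m+1) → Fin n =>
            idx 0 = i ∧ idxMultiset idx = e.val + Multiset.replicate r j)).card
            * Nat.factorial (r+1) = (e.card - 1) * Nat.factorial m := by
          rw [Finset.sum_congr rfl hNj, Finset.sum_const, Finset.card_erase_of_mem hie,
            smul_eq_mul]
        rw [hA, hB]
        have : Nat.factorial (m+1) = (m+1) * Nat.factorial m := Nat.factorial_succ m
        rw [this]
        have hcomb : (r + 1) + (e.card - 1) ≤ m + 1 := by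
          clear hcardle hsub hF F hA hB hNi hNj
          omega
        calc Nat.factorial m * (r+1) + (e.card - 1) * Nat.factorial m
            = ((r+1) + (e.card - 1)) * Nat.factorial m := by ring
          _ ≤ (m+1) * Nat.factorial m := Nat.mul_le_mul_right _ hcomb
      have hfinal : (F.card : ℝ) * ((Nat.factorial (r+1) : ℝ) / (Nat.factorial (m+1) : ℝ)) ≤ 1 := by
        have hnum : F.card * Nat.factorial (r+1) ≤ Nat.factorial (m+1) :=
          le_trans (Nat.mul_le_mul_right _ hcardle) hsum
        have hpos : (0:ℝ) < (Nat.factorial (m+1) : ℝ) := by positivity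
        rw [mul_div_assoc', div_le_one hpos]
        exact_mod_cast hnum
      rw [nsmul_eq_mul]
      exact hfinal
    · rw [if_neg hie]
      have hempty : (Finset.univ.filter (fun idx : Fin (m+1) → Fin n =>
          idx 0 = i ∧ ∃ j ∈ e, idxMultiset idx = e.val + Multiset.replicate r j)) = ∅ := by
        rw [Finset.filter_eq_empty_iff]
        rintro idx - ⟨h0, j, hj, hms⟩
        have : i ∈ idxMultiset idx := by
          rw [← h0, idxMultiset_succ]; exact Multiset.mem_cons_self _ _
        rw [hms] at this
        rcases Multiset.mem_add.mp this with h | h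
        · exact hie (Finset.mem_val.mp h)
        · exact hie (by rw [Multiset.eq_of_mem_replicate h]; exact hj)
      rw [hempty]
      simp

lemma prod_idx {k : ℕ} (idx : Fin k → Fin n) (f : Fin n → ℝ) :
    ∏ j, f (idx j) = ((idxMultiset idx).map f).prod := by
  simp [idxMultiset, List.map_ofFn, List.prod_ofFn]

lemma adjEntry_support {k : ℕ} {E : Finset (Finset (Fin n))} {idx : Fin k → Fin n}
    (h : adjEntry (R := ℝ) k E idx ≠ 0) :
    ∃ e ∈ E, (e.card = k ∧ idxMultiset idx = e.val) ∨
      (e.card < k ∧ ∃ j ∈ e, idxMultiset idx = e.val + Multiset.replicate (k - e.card) j) := by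
  by_contra hcon
  push_neg at hcon
  apply h
  unfold adjEntry
  refine Finset.sum_eq_zero fun e he => ?_
  have hc := hcon e he
  rw [if_neg, if_neg] <;> tauto

end Stmt6Aux

open Stmt6Aux

/-- `ρ(A_H) ≤ max { (d_{i₁}^{k-s+1} d_{i₂} ⋯ d_{i_s})^{1/k} :
{i₁,…,i_s} ∈ E(H), d_{i₁} ≥ ⋯ ≥ d_{i_s} }` for a connected hypergraph of rank `k`
with positive Perron vector. -/
theorem stmt6 {n k : ℕ} [NeZero k] (E : Finset (Finset (Fin n)))
    (hE : ∀ e ∈ E, e.Nonempty) (hconn : Conn E) (hrank : HasRank E k)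
    (x : Fin n → ℝ) (hx : ∀ i, 0 < x i)
    (heig : ∀ i, tApply k (adjEntry k E) x i = specRad k (adjEntry k E) * x i ^ (k - 1)) :
    ∃ e ∈ E, ∃ j1 ∈ e, (∀ v ∈ e, deg E v ≤ deg E j1) ∧
      specRad k (adjEntry k E) ≤
        ((deg E j1 : ℝ) ^ (k - e.card + 1) * ∏ v ∈ e.erase j1, (deg E v : ℝ))
          ^ (1 / (k : ℝ)) := by
  classical
  obtain ⟨m, rfl⟩ : ∃ m, k = m + 1 :=
    ⟨k - 1, (Nat.succ_pred_eq_of_pos (Nat.pos_of_ne_zero (NeZero.ne k))).symm⟩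
  set ρ := specRad (m+1) (adjEntry (m+1) E) with hρdef
  obtain ⟨hrk, e0, he0, he0card⟩ := hrank
  obtain ⟨v0, hv0⟩ := hE e0 he0
  -- ρ ≥ 0
  have htAnn : ∀ i, 0 ≤ tApply (m+1) (adjEntry (m+1) E) x i := by
    intro i
    refine Finset.sum_nonneg fun idx _ => ?_
    split_ifs
    · exact mul_nonneg (adjEntry_nonneg _ _ _)
        (Finset.prod_nonneg fun j _ => (hx _).le)
    · exact le_refl 0
  have hρ0 : 0 ≤ ρ := by
    have h := heig v0
    have h2 := htAnn v0
    rw [h] at h2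
    have hxp : 0 < x v0 ^ (m+1-1) := pow_pos (hx v0) _
    nlinarith
  -- maximizer
  set S := Finset.univ.filter
    (fun idx : Fin (m+1) → Fin n => adjEntry (R := ℝ) (m+1) E idx ≠ 0) with hSdef
  have hSne : S.Nonempty := by
    have hnodup := e0.nodup
    have hcnt := cnt_nodup e0.val hnodup
    have hc : Multiset.card e0.val = m + 1 := by rw [Finset.card_val]; exact he0card
    rw [hc] at hcnt
    have hpos : 0 < cnt (m+1) (e0.val : Multiset (Fin n)) := by
      rw [hcnt]; exact Nat.factorial_pos _
    rw [cnt, Finset.card_pos] at hpos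
    obtain ⟨idx, hidx⟩ := hpos
    have hms : idxMultiset idx = e0.val := (Finset.mem_filter.mp hidx).2
    refine ⟨idx, Finset.mem_filter.mpr ⟨Finset.mem_univ _, ?_⟩⟩
    have hterm : (0:ℝ) < 1 / (Nat.factorial (m+1-1) : ℝ) := by positivity
    have hle : 1 / (Nat.factorial (m+1-1) : ℝ) ≤ adjEntry (m+1) E idx := by
      unfold adjEntry
      have := Finset.single_le_sum (f := fun e : Finset (Fin n) =>
        if e.card = m+1 ∧ idxMultiset idx = e.val then 1 / (Nat.factorial (m+1-1) : ℝ)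
        else if e.card < m+1 ∧ ∃ j ∈ e, idxMultiset idx = e.val + Multiset.replicate (m+1 - e.card) j then
          (Nat.factorial (m+1 - e.card + 1) : ℝ) / (Nat.factorial (m+1) : ℝ)
        else 0)
        (fun e _ => by split_ifs <;> positivity) he0
      rw [if_pos ⟨he0card, hms⟩] at this
      exact this
    linarith
  obtain ⟨idx0, hidx0S, hmax⟩ := Finset.exists_max_image S (fun idx => ∏ j, x (idx j)) hSne
  set P := ∏ j, x (idx0 j) with hPdef
  have hPpos : 0 < P := Finset.prod_pos fun j _ => hx _
  -- key bound
  have hkey : ∀ i, ρ * x i ^ (m+1) ≤ (deg E i : ℝ) * P := by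
    intro i
    have h1 : x i * tApply (m+1) (adjEntry (m+1) E) x i
        = ∑ idx ∈ Finset.univ.filter (fun idx : Fin (m+1) → Fin n => idx 0 = i),
            adjEntry (m+1) E idx * ∏ j, x (idx j) := by
      rw [tApply, ← Finset.sum_filter, Finset.mul_sum]
      refine Finset.sum_congr rfl fun idx hidx => ?_
      have h0 : idx 0 = i := (Finset.mem_filter.mp hidx).2
      rw [← Finset.mul_prod_erase Finset.univ (fun j => x (idx j)) (Finset.mem_univ 0)]
      rw [← h0]
      ring
    have h2 : ∑ idx ∈ Finset.univ.filter (fun idx : Fin (m+1) → Fin n => idx 0 = i),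
          adjEntry (m+1) E idx * ∏ j, x (idx j)
        ≤ (∑ idx ∈ Finset.univ.filter (fun idx : Fin (m+1) → Fin n => idx 0 = i),
            (adjEntry (m+1) E idx : ℝ)) * P := by
      rw [Finset.sum_mul]
      refine Finset.sum_le_sum fun idx _ => ?_
      rcases eq_or_ne (adjEntry (R := ℝ) (m+1) E idx) 0 with hz | hz
      · rw [hz]; simp
      · have hmem : idx ∈ S := Finset.mem_filter.mpr ⟨Finset.mem_univ _, hz⟩
        exact mul_le_mul_of_nonneg_left (hmax idx hmem) (adjEntry_nonneg _ _ _)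
    have h3 := rowsum_le m E hrk hE i
    have h4 : ρ * x i ^ (m+1) = x i * tApply (m+1) (adjEntry (m+1) E) x i := by
      rw [heig i]
      have : m + 1 - 1 = m := rfl
      rw [this, pow_succ]
      ring
    rw [h4, h1]
    calc _ ≤ _ := h2
      _ ≤ (deg E i : ℝ) * P := mul_le_mul_of_nonneg_right h3 hPpos.le
  -- multiply over the maximizing tuple
  have hD : ρ ^ (m+1) ≤ ∏ j, (deg E (idx0 j) : ℝ) := by
    have hprodle : ∏ j : Fin (m+1), (ρ * x (idx0 j) ^ (m+1))
        ≤ ∏ j : Fin (m+1), ((deg E (idx0 j) : ℝ) * P) :=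
      Finset.prod_le_prod
        (fun j _ => mul_nonneg hρ0 (pow_pos (hx _) _).le)
        (fun j _ => hkey (idx0 j))
    rw [Finset.prod_mul_distrib, Finset.prod_mul_distrib, Finset.prod_const,
      Finset.prod_const, Finset.prod_pow, Finset.card_univ, Fintype.card_fin,
      ← hPdef] at hprodle
    exact le_of_mul_le_mul_right hprodle (pow_pos hPpos _)
  -- structure of the maximizer
  have hidx0ne : adjEntry (R := ℝ) (m+1) E idx0 ≠ 0 := (Finset.mem_filter.mp hidx0S).2
  obtain ⟨e, he, hcase⟩ := adjEntry_support hidx0ne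
  obtain ⟨j1, hj1e, hj1max⟩ := Finset.exists_max_image e (fun v => deg E v) (hE e he)
  refine ⟨e, he, j1, hj1e, hj1max, ?_⟩
  have hms : ∏ j, (deg E (idx0 j) : ℝ)
      = ((idxMultiset idx0).map (fun v => (deg E v : ℝ))).prod := prod_idx idx0 (fun v => (deg E v : ℝ))
  have hbase : ρ ^ (m+1) ≤ (deg E j1 : ℝ) ^ (m + 1 - e.card + 1)
      * ∏ v ∈ e.erase j1, (deg E v : ℝ) := by
    rcases hcase with ⟨hcard, hmse⟩ | ⟨hcard, j, hje, hmse⟩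
    · have h4 : ∏ j, (deg E (idx0 j) : ℝ) = ∏ v ∈ e, (deg E v : ℝ) := by
        rw [hms, hmse, ← Finset.prod_eq_multiset_prod]
      have h5 : m + 1 - e.card + 1 = 1 := by omega
      rw [h5, pow_one, Finset.mul_prod_erase e (fun v => (deg E v : ℝ)) hj1e]
      rw [h4] at hD
      exact hD
    · have h4 : ∏ j, (deg E (idx0 j) : ℝ)
          = (∏ v ∈ e, (deg E v : ℝ)) * (deg E j : ℝ) ^ (m + 1 - e.card) := by
        rw [hms, hmse, Multiset.map_add, Multiset.prod_add, Multiset.map_replicate,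
          Multiset.prod_replicate, ← Finset.prod_eq_multiset_prod]
      have h6 : (deg E j : ℝ) ^ (m + 1 - e.card) ≤ (deg E j1 : ℝ) ^ (m + 1 - e.card) := by
        apply pow_le_pow_left₀ (by positivity)
        exact_mod_cast hj1max j hje
      have h7 : (∏ v ∈ e, (deg E v : ℝ)) * (deg E j : ℝ) ^ (m + 1 - e.card)
          ≤ (deg E j1 : ℝ) ^ (m + 1 - e.card + 1) * ∏ v ∈ e.erase j1, (deg E v : ℝ) := by
        rw [pow_succ, ← Finset.mul_prod_erase e (fun v => (deg E v : ℝ)) hj1e]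
        have hprodnn : (0:ℝ) ≤ ∏ v ∈ e.erase j1, (deg E v : ℝ) :=
          Finset.prod_nonneg fun v _ => by positivity
        calc (deg E j1 : ℝ) * (∏ v ∈ e.erase j1, (deg E v : ℝ)) * (deg E j : ℝ) ^ (m + 1 - e.card)
            ≤ (deg E j1 : ℝ) * (∏ v ∈ e.erase j1, (deg E v : ℝ)) * (deg E j1 : ℝ) ^ (m + 1 - e.card) := by
              apply mul_le_mul_of_nonneg_left h6
              positivity
          _ = (deg E j1 : ℝ) ^ (m + 1 - e.card) * (deg E j1 : ℝ) * ∏ v ∈ e.erase j1, (deg E v : ℝ) := by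
              ring
      rw [h4] at hD
      exact le_trans hD h7
  -- finish with rpow
  have hbase0 : (0:ℝ) ≤ (deg E j1 : ℝ) ^ (m + 1 - e.card + 1)
      * ∏ v ∈ e.erase j1, (deg E v : ℝ) := by
    have : (0:ℝ) ≤ ∏ v ∈ e.erase j1, (deg E v : ℝ) :=
      Finset.prod_nonneg fun v _ => by positivity
    positivity
  have hkR : ((m+1 : ℕ) : ℝ) ≠ 0 := by positivity
  have hrho : ρ = (ρ ^ (m+1)) ^ (1 / ((m+1 : ℕ) : ℝ)) := by
    rw [← Real.rpow_natCast ρ (m+1), ← Real.rpow_mul hρ0, mul_one_div,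
      div_self hkR, Real.rpow_one]
  rw [hrho]
  exact Real.rpow_le_rpow (pow_nonneg hρ0 _) hbase (by positivity)
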